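/- Let F be an algebraically closed field of characteristic zero, G an additive abelian group, and ε : G × G → Fˣ a skew-symmetric bicharacter of G such that ε(a,a) = 1 for all a ∈ G. Let f : G × G → Fˣ be a map satisfying f(a,b) = ε(a,b)·f(b,a), f(a,0) = 1, and f(a,b)·f(a+b,c) = f(b,c)·f(a,b+c) for all a,b,c ∈ G. Then there exists a map h : G → Fˣ with h(0) = 1 such that the rescaled map f'(a,b) := h(a)·h(b)·h(a+b)⁻¹·f(a,b) satisfies f'(a,b)² = ε(a,b) for all a,b ∈ G (i.e. f is cohomologous to a square root of ε). -/

import Mathlib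

/-- Auxiliary type: the abelian extension of `G` by `Fˣ` defined by a symmetric cocycle. -/
structure CocycleExt (F : Type*) [Field F] (G : Type*) where
  u : Fˣ
  g : G

namespace CocycleExt

variable {F : Type*} [Field F] {G : Type*} [AddCommGroup G]

/-- Addition twisted by the cocycle `s`. -/
def cadd (s : G → G → Fˣ) (x y : CocycleExt F G) : CocycleExt F G :=
  ⟨x.u * y.u * s x.g y.g, x.g + y.g⟩

/-- Negation twisted by the cocycle `s`. -/
def cneg (s : G → G → Fˣ) (x : CocycleExt F G) : CocycleExt F G :=
  ⟨(x.u * s x.g (-x.g))⁻¹, -x.g⟩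

/-- The twisted addition turns `CocycleExt F G` into an abelian group when `s` is a
symmetric `2`-cocycle. -/
def addCommGroup (s : G → G → Fˣ)
    (hsym : ∀ a b, s a b = s b a) (hs0 : ∀ a, s a 0 = 1) (h0s : ∀ b, s 0 b = 1)
    (hcoc : ∀ a b c, s a b * s (a + b) c = s b c * s a (b + c)) :
    AddCommGroup (CocycleExt F G) :=
  letI : Zero (CocycleExt F G) := ⟨⟨1, 0⟩⟩
  letI : Add (CocycleExt F G) := ⟨cadd s⟩
  letI : Neg (CocycleExt F G) := ⟨cneg s⟩
  {
  add := cadd s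
  zero := ⟨1, 0⟩
  neg := cneg s
  nsmul := nsmulRec
  zsmul := zsmulRec
  add_assoc := by
    rintro ⟨xu, xg⟩ ⟨yu, yg⟩ ⟨zu, zg⟩
    show (⟨(xu * yu * s xg yg) * zu * s (xg + yg) zg, (xg + yg) + zg⟩ : CocycleExt F G)
        = ⟨xu * (yu * zu * s yg zg) * s xg (yg + zg), xg + (yg + zg)⟩
    simp only [mk.injEq]
    constructor
    · have hc' : (s xg yg : F) * s (xg + yg) zg = s yg zg * s xg (yg + zg) :=
        congrArg Units.val (hcoc xg yg zg)
      ext; push_cast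
      linear_combination (xu * yu * zu : F) * hc'
    · exact add_assoc xg yg zg
  zero_add := by
    rintro ⟨xu, xg⟩
    show (⟨1 * xu * s 0 xg, 0 + xg⟩ : CocycleExt F G) = ⟨xu, xg⟩
    rw [h0s]
    simp only [mk.injEq]
    exact ⟨by simp, zero_add xg⟩
  add_zero := by
    rintro ⟨xu, xg⟩
    show (⟨xu * 1 * s xg 0, xg + 0⟩ : CocycleExt F G) = ⟨xu, xg⟩
    rw [hs0]
    simp only [mk.injEq]
    exact ⟨by simp, add_zero xg⟩
  neg_add_cancel := by
    rintro ⟨xu, xg⟩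
    show (⟨(xu * s xg (-xg))⁻¹ * xu * s (-xg) xg, -xg + xg⟩ : CocycleExt F G) = ⟨1, 0⟩
    rw [hsym (-xg) xg]
    simp only [mk.injEq]
    exact ⟨by group, neg_add_cancel xg⟩
  add_comm := by
    rintro ⟨xu, xg⟩ ⟨yu, yg⟩
    show (⟨xu * yu * s xg yg, xg + yg⟩ : CocycleExt F G) = ⟨yu * xu * s yg xg, yg + xg⟩
    rw [hsym xg yg]
    simp only [mk.injEq]
    exact ⟨by rw [mul_comm xu yu], add_comm xg yg⟩ }

end CocycleExt

/-- A symmetric 2-cocycle with values in the units of an algebraically closed field of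
characteristic zero is a coboundary. -/
lemma symm_cocycle_is_coboundary {F : Type*} [Field F] [IsAlgClosed F] [CharZero F]
    {G : Type*} [AddCommGroup G] (s : G → G → Fˣ)
    (hsym : ∀ a b, s a b = s b a) (hs0 : ∀ a, s a 0 = 1)
    (hcoc : ∀ a b c, s a b * s (a + b) c = s b c * s a (b + c)) :
    ∃ k : G → Fˣ, k 0 = 1 ∧ ∀ a b, s a b * k (a + b) = k a * k b := by
  have h0s : ∀ b, s 0 b = 1 := fun b => by rw [hsym]; exact hs0 b
  -- divisibility of Fˣ
  haveI : RootableBy Fˣ ℕ := rootableByOfPowLeftSurj _ _ (fun {n} hn x => by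
    obtain ⟨z, hz⟩ := IsAlgClosed.exists_pow_nat_eq (x : F) (n := n) (Nat.pos_of_ne_zero hn)
    have hz0 : z ≠ 0 := by
      intro h; rw [h, zero_pow hn] at hz
      exact x.ne_zero hz.symm
    exact ⟨Units.mk0 z hz0, by ext; push_cast; exact hz⟩)
  haveI : RootableBy Fˣ ℤ := Group.rootableByIntOfRootableByNat Fˣ
  haveI : DivisibleBy (Additive Fˣ) ℤ :=
    { div := fun a n => Additive.ofMul (RootableBy.root (Additive.toMul a) n)
      div_zero := fun a => congrArg Additive.ofMul (RootableBy.root_zero _)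
      div_cancel := fun {n} a hn => by
        change Additive.ofMul ((RootableBy.root (Additive.toMul a) n) ^ n) = a
        rw [RootableBy.root_cancel _ hn]
        rfl }
  have hBaer : Module.Baer ℤ (Additive Fˣ) := Module.Baer.of_divisible _
  -- the extension group
  letI : AddCommGroup (CocycleExt F G) := CocycleExt.addCommGroup s hsym hs0 h0s hcoc
  have add_def : ∀ x y : CocycleExt F G, x + y = CocycleExt.cadd s x y := fun _ _ => rfl
  -- the inclusion of F^x
  let i : Additive Fˣ →+ CocycleExt F G :=
    AddMonoidHom.mk' (fun v => ⟨Additive.toMul v, 0⟩) (by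
      intro v w
      rw [add_def]
      show (⟨Additive.toMul (v + w), 0⟩ : CocycleExt F G)
          = ⟨Additive.toMul v * Additive.toMul w * s 0 0, 0 + 0⟩
      rw [h0s, toMul_add]
      simp)
  have hi : Function.Injective i := by
    intro v w hvw
    have : (i v).u = (i w).u := by rw [hvw]
    exact Additive.toMul.injective this
  obtain ⟨r, hr⟩ := hBaer.extension_property_addMonoidHom i hi (AddMonoidHom.id _)
  have hri : ∀ v : Additive Fˣ, r (i v) = v := fun v => DFunLike.congr_fun hr v
  refine ⟨fun a => Additive.toMul (r ⟨1, a⟩), ?_, ?_⟩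
  · show Additive.toMul (r ⟨1, 0⟩) = 1
    have h00 : (⟨1, 0⟩ : CocycleExt F G) = 0 := rfl
    rw [h00, map_zero]; rfl
  · intro a b
    have key : (⟨1, a⟩ : CocycleExt F G) + ⟨1, b⟩ = i (Additive.ofMul (s a b)) + ⟨1, a + b⟩ := by
      rw [add_def, add_def]
      show (⟨1 * 1 * s a b, a + b⟩ : CocycleExt F G)
          = ⟨s a b * 1 * s 0 (a + b), 0 + (a + b)⟩
      rw [h0s]
      simp
    have h1 := congrArg r key
    rw [map_add, map_add, hri] at h1
    have h2 := congrArg Additive.toMul h1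
    rw [toMul_add, toMul_add] at h2
    calc s a b * Additive.toMul (r ⟨1, a + b⟩)
        = Additive.toMul (Additive.ofMul (s a b)) * Additive.toMul (r ⟨1, a + b⟩) := rfl
      _ = Additive.toMul (r ⟨1, a⟩) * Additive.toMul (r ⟨1, b⟩) := h2.symm

/-- Every unit of an algebraically closed field has a square root. -/
lemma exists_sq_root_unit {F : Type*} [Field F] [IsAlgClosed F] (x : Fˣ) :
    ∃ y : Fˣ, y ^ 2 = x := by
  obtain ⟨z, hz⟩ := IsAlgClosed.exists_pow_nat_eq (x : F) (n := 2) (by norm_num)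
  have hz0 : z ≠ 0 := by
    intro h; rw [h, zero_pow (by norm_num)] at hz
    exact x.ne_zero hz.symm
  exact ⟨Units.mk0 z hz0, by ext; push_cast; exact hz⟩



/-- Over an algebraically closed field `F` of characteristic zero, let
`ε` be a skew-symmetric bicharacter of an additive abelian group `G` with `ε(a,a) = 1`
for all `a`, and let `f : G × G → Fˣ` satisfy `f(a,b) = ε(a,b)·f(b,a)`, `f(a,0) = 1`
and the cocycle identity `f(a,b)·f(a+b,c) = f(b,c)·f(a,b+c)`.  Then `f` is
cohomologous to a square root of `ε`: there is `h : G → Fˣ` with `h(0) = 1` such that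
`(h(a)·h(b)·h(a+b)⁻¹·f(a,b))² = ε(a,b)` for all `a, b ∈ G`. -/
theorem cocycle_cohomologous_to_sqrt_bicharacter
    {F : Type*} [Field F] [IsAlgClosed F] [CharZero F]
    {G : Type*} [AddCommGroup G]
    (ε : G → G → Fˣ)
    (hskew : ∀ a b : G, ε a b * ε b a = 1)
    (hmul : ∀ a b c : G, ε a (b + c) = ε a b * ε a c)
    (hdiag : ∀ a : G, ε a a = 1)
    (f : G → G → Fˣ)
    (hfsym : ∀ a b : G, f a b = ε a b * f b a)
    (hf0 : ∀ a : G, f a 0 = 1)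
    (hcoc : ∀ a b c : G, f a b * f (a + b) c = f b c * f a (b + c)) :
    ∃ h : G → Fˣ, h 0 = 1 ∧
      ∀ a b : G, (h a * h b * (h (a + b))⁻¹ * f a b) ^ 2 = ε a b := by
  classical
  -- the symmetric part of `f`
  set s : G → G → Fˣ := fun a b => f a b * f b a with hs
  have hsym : ∀ a b, s a b = s b a := fun a b => mul_comm _ _
  have hs0 : ∀ a, s a 0 = 1 := by
    intro a
    have f0 : f 0 a = 1 := by
      have h := hcoc a 0 a
      rw [hf0 a, add_zero, one_mul, zero_add] at h
      have h' : f a a * 1 = f a a * f 0 a := by rw [mul_one, mul_comm]; exact h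
      exact (mul_left_cancel h').symm
    simp only [hs, hf0 a, f0, one_mul]
  have hscoc : ∀ a b c, s a b * s (a + b) c = s b c * s a (b + c) := by
    intro a b c
    have h1 := hcoc a b c
    have h2 := hcoc c b a
    rw [add_comm c b, add_comm b a] at h2
    simp only [hs]
    calc (f a b * f b a) * (f (a + b) c * f c (a + b))
        = (f a b * f (a + b) c) * (f b a * f c (a + b)) := mul_mul_mul_comm _ _ _ _
      _ = (f b c * f a (b + c)) * (f c b * f (b + c) a) := by rw [h1, ← h2]
      _ = (f b c * f c b) * (f a (b + c) * f (b + c) a) := mul_mul_mul_comm _ _ _ _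
  obtain ⟨k, hk0, hk⟩ := symm_cocycle_is_coboundary s hsym hs0 hscoc
  -- pointwise square roots of `k⁻¹`
  set h : G → Fˣ := fun a =>
    if a = 0 then 1 else Classical.choose (exists_sq_root_unit (k a)⁻¹) with hh
  have hsq : ∀ a, h a ^ 2 = (k a)⁻¹ := by
    intro a
    by_cases ha : a = 0
    · subst ha; simp [hh, hk0]
    · simp only [hh, if_neg ha]
      exact Classical.choose_spec (exists_sq_root_unit (k a)⁻¹)
  refine ⟨h, by simp [hh], ?_⟩
  intro a b
  have e : (h a * h b * (h (a + b))⁻¹ * f a b) ^ 2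
      = h a ^ 2 * h b ^ 2 * (h (a + b) ^ 2)⁻¹ * f a b ^ 2 := by
    rw [mul_pow, mul_pow, mul_pow, inv_pow]
  rw [e, hsq a, hsq b, hsq (a + b), inv_inv]
  have hf2 : f a b ^ 2 = ε a b * (f a b * f b a) := by
    rw [pow_two]
    nth_rewrite 1 [hfsym a b]
    rw [mul_assoc, mul_comm (f b a) (f a b)]
  rw [hf2]
  have hkab := hk a b
  simp only [hs] at hkab
  -- now a commutative-group identity
  ext
  have hk' : (f a b : F) * f b a * k (a + b) = k a * k b := by
    have := congrArg Units.val hkab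
    push_cast at this
    exact this
  push_cast
  field_simp
  linear_combination hk'
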